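/- Let |ψ⟩_AB, |φ⟩_AB be bipartite pure states with reduced states ρ_A, σ_A, and for η ≥ 0 let W_η = sgn_η(Tr_A(|φ⟩⟨ψ|)), where sgn_η keeps only singular values exceeding η. Then |⟨φ|(id ⊗ W_η)|ψ⟩|² ≥ F(ρ_A, σ_A) − 2η·dim(B). -/

import Mathlib

open Matrix ComplexOrder

/-- The positive semidefinite square root of a matrix (junk value `0` off
positive semidefinite matrices). -/
noncomputable def msqrt {n : Type*} [Fintype n] [DecidableEq n] (A : Matrix n n ℂ) :
    Matrix n n ℂ :=
  letI := Classical.propDecidable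
  if h : A.PosSemidef then
    (h.1.eigenvectorUnitary : Matrix n n ℂ) *
      Matrix.diagonal ((↑) ∘ Real.sqrt ∘ h.1.eigenvalues) *
      (star h.1.eigenvectorUnitary : Matrix n n ℂ)
  else 0

/-- The trace norm `‖X‖₁ = Tr √(XᴴX)`. -/
noncomputable def traceNorm {n : Type*} [Fintype n] [DecidableEq n] (X : Matrix n n ℂ) : ℝ :=
  (msqrt (Xᴴ * X)).trace.re

/-- The (squared) fidelity `F(ρ,σ) = ‖√ρ √σ‖₁²`. -/
noncomputable def fidelity {n : Type*} [Fintype n] [DecidableEq n] (ρ σ : Matrix n n ℂ) : ℝ :=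
  traceNorm (msqrt ρ * msqrt σ) ^ 2

/-- The trace distance `td(ρ,σ) = ‖ρ - σ‖₁ / 2`. -/
noncomputable def traceDist {n : Type*} [Fintype n] [DecidableEq n] (ρ σ : Matrix n n ℂ) : ℝ :=
  traceNorm (ρ - σ) / 2

/-- The outer product `|u⟩⟨v|`. -/
noncomputable def outer {n : Type*} (u v : n → ℂ) : Matrix n n ℂ :=
  Matrix.of fun i j => u i * (starRingEnd ℂ) (v j)

/-- Partial trace over the first tensor factor. -/
noncomputable def ptrFst {α β : Type*} [Fintype α] (M : Matrix (α × β) (α × β) ℂ) : Matrix β β ℂ :=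
  Matrix.of fun b b' => ∑ a, M (a, b) (a, b')

/-- Partial trace over the second tensor factor. -/
noncomputable def ptrSnd {α β : Type*} [Fintype β] (M : Matrix (α × β) (α × β) ℂ) : Matrix α α ℂ :=
  Matrix.of fun a a' => ∑ b, M (a, b) (a', b)

/-- Functional calculus for Hermitian matrices: apply `f` to the eigenvalues
(junk value `0` off Hermitian matrices). -/
noncomputable def hfun {n : Type*} [Fintype n] [DecidableEq n]
    (A : Matrix n n ℂ) (f : ℝ → ℝ) : Matrix n n ℂ :=
  letI := Classical.propDecidable
  if h : A.IsHermitian then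
    (h.eigenvectorUnitary : Matrix n n ℂ) *
      Matrix.diagonal (fun i => (f (h.eigenvalues i) : ℂ)) *
      (star h.eigenvectorUnitary : Matrix n n ℂ)
  else 0

/-- `sgnCutoff η K` is `sgn_η(K) = U sgn_η(Σ) V†` for a singular value
decomposition `K = U Σ V†`, where `sgn_η` sends singular values `> η` to `1` and
all other singular values to `0`.  Equivalently, `sgn_η(K) = K · g_η(√(KᴴK))`
where `g_η(x) = x⁻¹` for `x > η` and `g_η(x) = 0` otherwise. -/
noncomputable def sgnCutoff {n : Type*} [Fintype n] [DecidableEq n] (η : ℝ)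
    (K : Matrix n n ℂ) : Matrix n n ℂ :=
  K * hfun (msqrt (Kᴴ * K)) (fun x => if η < x then x⁻¹ else 0)

section HfunLemmas

open Polynomial

variable {m n : Type*} [Fintype m] [Fintype n] [DecidableEq m] [DecidableEq n]
variable {A : Matrix n n ℂ}

lemma hfun_of_isHermitian (hA : A.IsHermitian) (f : ℝ → ℝ) :
    hfun A f = (hA.eigenvectorUnitary : Matrix n n ℂ) *
      Matrix.diagonal (fun i => (f (hA.eigenvalues i) : ℂ)) *
      (star (hA.eigenvectorUnitary : Matrix n n ℂ)) := by
  unfold hfun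
  rw [dif_pos hA]
  congr!

lemma star_coe_mul (hA : A.IsHermitian) :
    star (hA.eigenvectorUnitary : Matrix n n ℂ) * (hA.eigenvectorUnitary : Matrix n n ℂ) = 1 := by
  simpa using congrArg (Subtype.val) (star_mul_self hA.eigenvectorUnitary)

lemma coe_mul_star (hA : A.IsHermitian) :
    (hA.eigenvectorUnitary : Matrix n n ℂ) * star (hA.eigenvectorUnitary : Matrix n n ℂ) = 1 := by
  simpa using congrArg (Subtype.val) (mul_star_self hA.eigenvectorUnitary)

lemma conj_mul_conj (hA : A.IsHermitian) (d d' : n → ℂ) :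
    ((hA.eigenvectorUnitary : Matrix n n ℂ) * Matrix.diagonal d *
        star (hA.eigenvectorUnitary : Matrix n n ℂ)) *
      ((hA.eigenvectorUnitary : Matrix n n ℂ) * Matrix.diagonal d' *
        star (hA.eigenvectorUnitary : Matrix n n ℂ)) =
    (hA.eigenvectorUnitary : Matrix n n ℂ) * Matrix.diagonal (fun i => d i * d' i) *
      star (hA.eigenvectorUnitary : Matrix n n ℂ) := by
  set U := (hA.eigenvectorUnitary : Matrix n n ℂ)
  have key : ∀ X : Matrix n n ℂ, star U * (U * X) = X := fun X => by
    rw [← Matrix.mul_assoc, star_coe_mul hA, Matrix.one_mul]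
  simp only [Matrix.mul_assoc]
  rw [key, ← Matrix.mul_assoc (Matrix.diagonal d), Matrix.diagonal_mul_diagonal]

lemma hfun_mul_hfun (hA : A.IsHermitian) (f g : ℝ → ℝ) :
    hfun A f * hfun A g = hfun A (fun x => f x * g x) := by
  rw [hfun_of_isHermitian hA, hfun_of_isHermitian hA, hfun_of_isHermitian hA,
    conj_mul_conj hA]
  push_cast
  rfl

lemma hfun_id (hA : A.IsHermitian) : hfun A (fun x => x) = A := by
  rw [hfun_of_isHermitian hA]
  exact hA.spectral_theorem.symm

lemma hfun_one (hA : A.IsHermitian) : hfun A (fun _ => 1) = 1 := by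
  rw [hfun_of_isHermitian hA]
  simp [Matrix.diagonal_one, coe_mul_star hA]

lemma hfun_sub (hA : A.IsHermitian) (f g : ℝ → ℝ) :
    hfun A f - hfun A g = hfun A (fun x => f x - g x) := by
  rw [hfun_of_isHermitian hA, hfun_of_isHermitian hA, hfun_of_isHermitian hA,
    ← Matrix.sub_mul, ← Matrix.mul_sub, Matrix.diagonal_sub]
  push_cast
  rfl

lemma hfun_conjTranspose (hA : A.IsHermitian) (f : ℝ → ℝ) :
    (hfun A f)ᴴ = hfun A f := by
  rw [hfun_of_isHermitian hA]
  simp only [Matrix.conjTranspose_mul, Matrix.diagonal_conjTranspose,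
    Matrix.star_eq_conjTranspose, Matrix.conjTranspose_conjTranspose]
  rw [Matrix.mul_assoc,
    show (star fun i => ((f (hA.eigenvalues i) : ℂ))) = (fun i => ((f (hA.eigenvalues i) : ℂ))) from
      funext fun i => Complex.conj_ofReal _]

lemma hfun_trace (hA : A.IsHermitian) (f : ℝ → ℝ) :
    (hfun A f).trace = ((∑ i, f (hA.eigenvalues i) : ℝ) : ℂ) := by
  rw [hfun_of_isHermitian hA, Matrix.trace_mul_comm, ← Matrix.mul_assoc, star_coe_mul hA,
    Matrix.one_mul, Matrix.trace_diagonal]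
  push_cast
  rfl

lemma hfun_posSemidef (hA : A.IsHermitian) {f : ℝ → ℝ} (hf : ∀ x, 0 ≤ f x) :
    (hfun A f).PosSemidef := by
  rw [hfun_of_isHermitian hA]
  have : star (hA.eigenvectorUnitary : Matrix n n ℂ) =
      (hA.eigenvectorUnitary : Matrix n n ℂ)ᴴ := rfl
  rw [this]
  apply Matrix.PosSemidef.mul_mul_conjTranspose_same
  refine Matrix.posSemidef_diagonal_iff.mpr fun i => ?_
  rw [Complex.le_def]
  simp [hf]


lemma aeval_conj_unitary (U B : Matrix n n ℂ) (hU : star U * U = 1) (hU' : U * star U = 1)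
    (p : ℝ[X]) : aeval (U * B * star U) p = U * aeval B p * star U := by
  induction p using Polynomial.induction_on' with
  | add p q hp hq => simp [hp, hq, Matrix.mul_add, Matrix.add_mul]
  | monomial k a =>
    have hpow : ∀ k : ℕ, (U * B * star U) ^ k = U * B ^ k * star U := by
      intro k
      induction k with
      | zero => simpa using hU'.symm
      | succ k ih =>
        have key : ∀ X : Matrix n n ℂ, star U * (U * X) = X := fun X => by
          rw [← Matrix.mul_assoc, hU, Matrix.one_mul]
        rw [pow_succ, ih, pow_succ]
        simp only [Matrix.mul_assoc]
        rw [key]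
    rw [aeval_monomial, aeval_monomial, hpow, Algebra.algebraMap_eq_smul_one, smul_one_mul,
      smul_one_mul]
    simp only [Matrix.mul_smul, Matrix.smul_mul]

lemma aeval_diagonal (d : n → ℝ) (p : ℝ[X]) :
    aeval (Matrix.diagonal (fun i => (d i : ℂ))) p =
      Matrix.diagonal (fun i => ((p.eval (d i) : ℝ) : ℂ)) := by
  induction p using Polynomial.induction_on' with
  | add p q hp hq => simp [hp, hq, Matrix.diagonal_add]
  | monomial k a =>
    rw [aeval_monomial, Algebra.algebraMap_eq_smul_one, smul_one_mul, Matrix.diagonal_pow]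
    ext i j
    rcases eq_or_ne i j with rfl | hij
    · simp [eval_monomial]
    · simp [Matrix.diagonal_apply_ne _ hij]

lemma aeval_transpose (B : Matrix n n ℂ) (p : ℝ[X]) :
    aeval Bᵀ p = (aeval B p)ᵀ := by
  induction p using Polynomial.induction_on' with
  | add p q hp hq => simp [hp, hq, Matrix.transpose_add]
  | monomial k a =>
    rw [aeval_monomial, aeval_monomial, Algebra.algebraMap_eq_smul_one, smul_one_mul,
      smul_one_mul, Matrix.transpose_smul, Matrix.transpose_pow]

lemma aeval_comm {B : Matrix m n ℂ} {C : Matrix n n ℂ} {D : Matrix m m ℂ}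
    (h : B * C = D * B) (p : ℝ[X]) : B * aeval C p = aeval D p * B := by
  have hpow : ∀ k : ℕ, B * C ^ k = D ^ k * B := by
    intro k
    induction k with
    | zero => simp
    | succ k ih =>
      rw [pow_succ, pow_succ, ← Matrix.mul_assoc, ih, Matrix.mul_assoc, h, ← Matrix.mul_assoc]
  induction p using Polynomial.induction_on' with
  | add p q hp hq => simp [hp, hq, Matrix.mul_add, Matrix.add_mul]
  | monomial k a =>
    rw [aeval_monomial, aeval_monomial, Algebra.algebraMap_eq_smul_one,
      Algebra.algebraMap_eq_smul_one, smul_one_mul, smul_one_mul, Matrix.mul_smul, hpow,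
      Matrix.smul_mul]

lemma exists_interpolating (S : Finset ℝ) (f : ℝ → ℝ) :
    ∃ p : ℝ[X], ∀ x ∈ S, p.eval x = f x :=
  ⟨Lagrange.interpolate S id f, fun x hx =>
    Lagrange.eval_interpolate_at_node (v := id) f (Set.injOn_id _) hx⟩



lemma hfun_eq_aeval (hA : A.IsHermitian) (f : ℝ → ℝ) (p : ℝ[X])
    (hp : ∀ i, p.eval (hA.eigenvalues i) = f (hA.eigenvalues i)) :
    hfun A f = aeval A p := by
  conv_rhs => rw [hA.spectral_theorem]
  rw [Unitary.conjStarAlgAut_apply]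
  rw [aeval_conj_unitary _ _ (star_coe_mul hA) (coe_mul_star hA),
    show Matrix.diagonal (RCLike.ofReal ∘ hA.eigenvalues) =
      Matrix.diagonal (fun i => ((hA.eigenvalues i : ℝ) : ℂ)) from rfl,
    aeval_diagonal, hfun_of_isHermitian hA,
    show (fun i => ((f (hA.eigenvalues i) : ℝ) : ℂ)) =
      (fun i => ((p.eval (hA.eigenvalues i) : ℝ) : ℂ)) from funext fun i => by rw [hp]]

lemma isHermitian_transpose_of (hA : A.IsHermitian) : Aᵀ.IsHermitian := hA.transpose

lemma trace_hfun_transpose (hA : A.IsHermitian) (f : ℝ → ℝ) :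
    (hfun Aᵀ f).trace = (hfun A f).trace := by
  have hAT : Aᵀ.IsHermitian := isHermitian_transpose_of hA
  obtain ⟨p, hp⟩ := exists_interpolating
    ((Finset.univ.image hA.eigenvalues) ∪ (Finset.univ.image hAT.eigenvalues)) f
  rw [hfun_eq_aeval hA f p (fun i => hp _ (Finset.mem_union_left _
      (Finset.mem_image_of_mem _ (Finset.mem_univ i)))),
    hfun_eq_aeval hAT f p (fun i => hp _ (Finset.mem_union_right _
      (Finset.mem_image_of_mem _ (Finset.mem_univ i)))),
    aeval_transpose, Matrix.trace_transpose]

lemma trace_hfun_mul_comm (B : Matrix m n ℂ) (f : ℝ → ℝ) (hf : f 0 = 0) :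
    (hfun (Bᴴ * B) f).trace = (hfun (B * Bᴴ) f).trace := by
  have h1 : (Bᴴ * B).IsHermitian := (Matrix.posSemidef_conjTranspose_mul_self B).1
  have h2 : (B * Bᴴ).IsHermitian := (Matrix.posSemidef_self_mul_conjTranspose B).1
  obtain ⟨p, hp⟩ := exists_interpolating
    (((Finset.univ.image h1.eigenvalues) ∪ (Finset.univ.image h2.eigenvalues)) ∪ {0}) f
  have hp0 : p.eval 0 = 0 := by
    rw [hp 0 (Finset.mem_union_right _ (Finset.mem_singleton_self 0)), hf]
  obtain ⟨q, rfl⟩ : ∃ q, p = X * q := by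
    have := (Polynomial.X_dvd_iff (f := p)).mpr
      (by rwa [← Polynomial.coeff_zero_eq_eval_zero] at hp0)
    exact this
  rw [hfun_eq_aeval h1 f _ (fun i => hp _ (Finset.mem_union_left _ (Finset.mem_union_left _
      (Finset.mem_image_of_mem _ (Finset.mem_univ i))))),
    hfun_eq_aeval h2 f _ (fun i => hp _ (Finset.mem_union_left _ (Finset.mem_union_right _
      (Finset.mem_image_of_mem _ (Finset.mem_univ i)))))]
  rw [_root_.map_mul, _root_.map_mul, Polynomial.aeval_X, Polynomial.aeval_X]
  have hcomm : B * (Bᴴ * B) = (B * Bᴴ) * B := by rw [Matrix.mul_assoc]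
  calc (Bᴴ * B * aeval (Bᴴ * B) q).trace
      = (Bᴴ * (B * aeval (Bᴴ * B) q)).trace := by rw [Matrix.mul_assoc]
    _ = (Bᴴ * (aeval (B * Bᴴ) q * B)).trace := by rw [aeval_comm hcomm]
    _ = ((Bᴴ * aeval (B * Bᴴ) q) * B).trace := by rw [Matrix.mul_assoc]
    _ = (B * (Bᴴ * aeval (B * Bᴴ) q)).trace := by rw [Matrix.trace_mul_comm]
    _ = (B * Bᴴ * aeval (B * Bᴴ) q).trace := by rw [Matrix.mul_assoc]



lemma msqrt_eq_hfun (hA : A.PosSemidef) : msqrt A = hfun A Real.sqrt := by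
  unfold msqrt hfun
  rw [dif_pos hA, dif_pos hA.1]
  rfl

lemma msqrt_posSemidef (hA : A.PosSemidef) : (msqrt A).PosSemidef := by
  rw [msqrt_eq_hfun hA]
  exact hfun_posSemidef hA.1 Real.sqrt_nonneg

lemma msqrt_mul_self (hA : A.PosSemidef) : msqrt A * msqrt A = A := by
  rw [msqrt_eq_hfun hA, hfun_mul_hfun hA.1]
  conv_rhs => rw [← hfun_id hA.1]
  rw [hfun_of_isHermitian hA.1, hfun_of_isHermitian hA.1]
  congr 3
  funext i
  rw [Real.mul_self_sqrt (hA.eigenvalues_nonneg i)]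

lemma dotProduct_star_self (v : n → ℂ) :
    star v ⬝ᵥ v = ((∑ i, ‖v i‖ ^ 2 : ℝ) : ℂ) := by
  push_cast
  unfold dotProduct
  congr 1
  funext i
  simp only [Pi.star_apply]
  rw [show star (v i) = (starRingEnd ℂ) (v i) from rfl, ← Complex.normSq_eq_conj_mul_self,
    ← Complex.sq_norm]
  push_cast
  ring

lemma contraction_of_posSemidef {W : Matrix n n ℂ} (h : (1 - Wᴴ * W).PosSemidef)
    (v : n → ℂ) : ∑ i, ‖(W *ᵥ v) i‖ ^ 2 ≤ ∑ i, ‖v i‖ ^ 2 := by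
  have h2 := h.dotProduct_mulVec_nonneg v
  rw [Matrix.sub_mulVec, dotProduct_sub, Matrix.one_mulVec] at h2
  have h3 : star v ⬝ᵥ ((Wᴴ * W) *ᵥ v) = star (W *ᵥ v) ⬝ᵥ (W *ᵥ v) := by
    rw [← Matrix.mulVec_mulVec, Matrix.dotProduct_mulVec, ← Matrix.star_mulVec]
  rw [h3, dotProduct_star_self, dotProduct_star_self, ← Complex.ofReal_sub] at h2
  have := (Complex.zero_le_real).mp h2
  linarith

lemma dotProduct_cauchy_schwarz (u w : n → ℂ) :
    ‖star u ⬝ᵥ w‖ ≤ Real.sqrt (∑ i, ‖u i‖ ^ 2) * Real.sqrt (∑ i, ‖w i‖ ^ 2) := by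
  let u' : EuclideanSpace ℂ n := WithLp.toLp 2 u
  let w' : EuclideanSpace ℂ n := WithLp.toLp 2 w
  have h := norm_inner_le_norm (𝕜 := ℂ) u' w'
  rw [EuclideanSpace.norm_eq, EuclideanSpace.norm_eq] at h
  have hinner : (inner ℂ u' w' : ℂ) = star u ⬝ᵥ w := by
    rw [PiLp.inner_apply]
    unfold dotProduct
    refine Finset.sum_congr rfl fun i _ => ?_
    simp [u', w', mul_comm]
  rwa [hinner] at h

end HfunLemmas


lemma conjT_transpose {p q : Type*} (X : Matrix p q ℂ) : (Xᵀ)ᴴ = (Xᴴ)ᵀ := by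
  ext i j
  simp

open Kronecker in
lemma kron_mulVec {α β : Type*} [Fintype α] [Fintype β] [DecidableEq α]
    (Wm : Matrix β β ℂ) (ψ : α × β → ℂ) (a : α) (b : β) :
    ((((1 : Matrix α α ℂ) ⊗ₖ Wm) *ᵥ ψ)) (a, b) = (Wm *ᵥ fun b' => ψ (a, b')) b := by
  simp only [Matrix.mulVec, dotProduct, Fintype.sum_prod_type,
    Matrix.kroneckerMap_apply, Matrix.one_apply, ite_mul, one_mul, zero_mul]
  rw [Finset.sum_comm]
  simp [Finset.sum_ite_eq']

open Kronecker in
lemma dot_eq_trace {α β : Type*} [Fintype α] [Fintype β] [DecidableEq α]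
    (ψ φ : α × β → ℂ) (Wm : Matrix β β ℂ) :
    star φ ⬝ᵥ (((1 : Matrix α α ℂ) ⊗ₖ Wm) *ᵥ ψ) = (Wm * (ptrFst (outer φ ψ))ᴴ).trace := by
  have lhs : star φ ⬝ᵥ (((1 : Matrix α α ℂ) ⊗ₖ Wm) *ᵥ ψ)
      = ∑ a, ∑ b, ∑ b', (starRingEnd ℂ) (φ (a, b)) * (Wm b b' * ψ (a, b')) := by
    simp only [dotProduct, Fintype.sum_prod_type, Pi.star_apply]
    refine Finset.sum_congr rfl fun a _ => Finset.sum_congr rfl fun b _ => ?_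
    rw [kron_mulVec]
    simp only [Matrix.mulVec, dotProduct, Finset.mul_sum]
    rfl
  rw [lhs]
  simp only [Matrix.trace, Matrix.diag, Matrix.mul_apply, Matrix.conjTranspose_apply,
    ptrFst, outer, Matrix.of_apply]
  rw [Finset.sum_comm]
  refine Finset.sum_congr rfl fun b _ => ?_
  rw [Finset.sum_comm]
  refine Finset.sum_congr rfl fun b' _ => ?_
  rw [star_sum, Finset.mul_sum]
  refine Finset.sum_congr rfl fun a _ => ?_
  simp only [star_mul', RingHomCompTriple.comp_apply, RingHom.id_apply]
  rw [show star ((starRingEnd ℂ) (ψ (a, b'))) = ψ (a, b') from by simp]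
  rw [show star (φ (a, b)) = (starRingEnd ℂ) (φ (a, b)) from rfl]
  ring

lemma fidelity_eq {α β : Type*} [Fintype α] [Fintype β] [DecidableEq α] [DecidableEq β]
    (ψ φ : α × β → ℂ) :
    fidelity (ptrSnd (outer ψ ψ)) (ptrSnd (outer φ φ)) = traceNorm (ptrFst (outer φ ψ)) ^ 2 := by
  classical
  set M : Matrix α β ℂ := Matrix.of (fun a b => ψ (a, b)) with hM
  set N : Matrix α β ℂ := Matrix.of (fun a b => φ (a, b)) with hN
  have hρ : ptrSnd (outer ψ ψ) = M * Mᴴ := by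
    ext a a'
    simp [ptrSnd, outer, Matrix.mul_apply, Matrix.conjTranspose_apply, hM]
  have hσ : ptrSnd (outer φ φ) = N * Nᴴ := by
    ext a a'
    simp [ptrSnd, outer, Matrix.mul_apply, Matrix.conjTranspose_apply, hN]
  have hK : ptrFst (outer φ ψ) = Nᵀ * (Mᴴ)ᵀ := by
    ext b b'
    simp [ptrFst, outer, Matrix.mul_apply, Matrix.conjTranspose_apply,
      Matrix.transpose_apply, hM, hN]
  rw [hρ, hσ, hK, fidelity]
  congr 1
  have hσp : (N * Nᴴ).PosSemidef := Matrix.posSemidef_self_mul_conjTranspose N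
  have hρp : (M * Mᴴ).PosSemidef := Matrix.posSemidef_self_mul_conjTranspose M
  set Sρ : Matrix α α ℂ := msqrt (M * Mᴴ) with hSρ
  set Sσ : Matrix α α ℂ := msqrt (N * Nᴴ) with hSσ
  have hSσh : Sσᴴ = Sσ := (msqrt_posSemidef hσp).1
  have hSρh : Sρᴴ = Sρ := (msqrt_posSemidef hρp).1
  set C : Matrix α β ℂ := Sσ * M with hC
  have h1 : (Sρ * Sσ)ᴴ * (Sρ * Sσ) = C * Cᴴ := by
    rw [Matrix.conjTranspose_mul, hSσh, hSρh, hC, Matrix.conjTranspose_mul, hSσh,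
      Matrix.mul_assoc Sσ, ← Matrix.mul_assoc Sρ, msqrt_mul_self hρp]
    simp only [Matrix.mul_assoc]
  have h2 : (Nᵀ * (Mᴴ)ᵀ)ᴴ * (Nᵀ * (Mᴴ)ᵀ) = ((Cᴴ)ᵀ)ᴴ * (Cᴴ)ᵀ := by
    have e1 : (Nᵀ * (Mᴴ)ᵀ)ᴴ = Mᵀ * (Nᴴ)ᵀ := by
      rw [Matrix.conjTranspose_mul, conjT_transpose, conjT_transpose,
        Matrix.conjTranspose_conjTranspose]
    have e2 : ((Cᴴ)ᵀ)ᴴ = Cᵀ := by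
      rw [conjT_transpose, Matrix.conjTranspose_conjTranspose]
    have e3 : (Cᴴ)ᵀ = Sσᵀ * (Mᴴ)ᵀ := by
      rw [hC, Matrix.conjTranspose_mul, hSσh, Matrix.transpose_mul]
    have e4 : Cᵀ = Mᵀ * Sσᵀ := by rw [hC, Matrix.transpose_mul]
    rw [e1, e2, e3, e4]
    calc Mᵀ * (Nᴴ)ᵀ * (Nᵀ * (Mᴴ)ᵀ) = Mᵀ * ((N * Nᴴ)ᵀ * (Mᴴ)ᵀ) := by
          rw [Matrix.transpose_mul]
          simp only [Matrix.mul_assoc]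
      _ = Mᵀ * Sσᵀ * (Sσᵀ * (Mᴴ)ᵀ) := by
          rw [show (N * Nᴴ)ᵀ = Sσᵀ * Sσᵀ from by
            rw [← Matrix.transpose_mul, msqrt_mul_self hσp]]
          simp only [Matrix.mul_assoc]
  have h3 : (Cᴴ)ᵀ * ((Cᴴ)ᵀ)ᴴ = (C * Cᴴ)ᵀ := by
    rw [conjT_transpose, Matrix.conjTranspose_conjTranspose, ← Matrix.transpose_mul]
  have hcc : (C * Cᴴ).IsHermitian := (Matrix.posSemidef_self_mul_conjTranspose C).1
  rw [traceNorm, traceNorm,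
    msqrt_eq_hfun (Matrix.posSemidef_conjTranspose_mul_self (Sρ * Sσ)),
    msqrt_eq_hfun (Matrix.posSemidef_conjTranspose_mul_self (Nᵀ * (Mᴴ)ᵀ)), h1, h2,
    trace_hfun_mul_comm ((Cᴴ)ᵀ) Real.sqrt Real.sqrt_zero, h3,
    trace_hfun_transpose hcc]

open Kronecker in
/-- The canonical Uhlmann partial isometry with cutoff `η ≥ 0`,
`W_η = sgn_η(Tr_A(|φ⟩⟨ψ|))`, approximately achieves the fidelity:
`|⟨φ|(id ⊗ W_η)|ψ⟩|² ≥ F(ρ_A, σ_A) − 2η·dim(B)`. -/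
theorem canonical_uhlmann_cutoff {α β : Type*}
    [Fintype α] [Fintype β] [DecidableEq α] [DecidableEq β]
    (ψ φ : α × β → ℂ)
    (hψ : ∑ x, ‖ψ x‖ ^ 2 = 1) (hφ : ∑ x, ‖φ x‖ ^ 2 = 1)
    (η : ℝ) (hη : 0 ≤ η)
    (W : Matrix β β ℂ) (hW : W = sgnCutoff η (ptrFst (outer φ ψ))) :
    fidelity (ptrSnd (outer ψ ψ)) (ptrSnd (outer φ φ)) - 2 * η * (Fintype.card β : ℝ) ≤
      ‖star φ ⬝ᵥ (((1 : Matrix α α ℂ) ⊗ₖ W) *ᵥ ψ)‖ ^ 2 := by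
  classical
  set K : Matrix β β ℂ := ptrFst (outer φ ψ) with hKdef
  have hKK : (Kᴴ * K).PosSemidef := Matrix.posSemidef_conjTranspose_mul_self K
  have hPsd : (msqrt (Kᴴ * K)).PosSemidef := msqrt_posSemidef hKK
  set P : Matrix β β ℂ := msqrt (Kᴴ * K) with hPdef
  have hPH : P.IsHermitian := hPsd.1
  have he0 : ∀ i, 0 ≤ hPH.eigenvalues i := hPsd.eigenvalues_nonneg
  have hPP : P * P = Kᴴ * K := msqrt_mul_self hKK
  have hsgn : ∀ η' : ℝ, sgnCutoff η' K = K * hfun P (fun x => if η' < x then x⁻¹ else 0) := by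
    intro η'
    unfold sgnCutoff
    rw [← hPdef]
  have hgid : ∀ η' : ℝ, 0 ≤ η' → Kᴴ * K * hfun P (fun x => if η' < x then x⁻¹ else 0)
      = hfun P (fun x => if η' < x then x else 0) := by
    intro η' hη'
    have h1 : hfun P (fun x => x) * hfun P (fun x => x) *
        hfun P (fun x => if η' < x then x⁻¹ else 0)
        = hfun P (fun x => x * x * (if η' < x then x⁻¹ else 0)) := by
      rw [hfun_mul_hfun hPH, hfun_mul_hfun hPH]
    rw [hfun_id hPH] at h1
    have hfe : (fun x : ℝ => x * x * (if η' < x then x⁻¹ else 0))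
        = (fun x : ℝ => if η' < x then x else 0) := by
      funext x
      by_cases hx : η' < x
      · have hx0 : x ≠ 0 := ne_of_gt (lt_of_le_of_lt hη' hx)
        simp only [if_pos hx]
        rw [mul_assoc, mul_inv_cancel₀ hx0, mul_one]
      · simp [hx]
    rw [← hPP, h1, hfe]
  have hval : ∀ η' : ℝ, 0 ≤ η' → (sgnCutoff η' K * Kᴴ).trace
      = ((∑ i, if η' < hPH.eigenvalues i then hPH.eigenvalues i else 0 : ℝ) : ℂ) := by
    intro η' hη'
    rw [hsgn η', Matrix.trace_mul_cycle, hgid η' hη', hfun_trace hPH]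
  have hWc : ∀ η' : ℝ, 0 ≤ η' → (1 - (sgnCutoff η' K)ᴴ * sgnCutoff η' K).PosSemidef := by
    intro η' hη'
    have hstep : (sgnCutoff η' K)ᴴ * sgnCutoff η' K
        = hfun P (fun x => (if η' < x then x⁻¹ else 0) * (if η' < x then x else 0)) := by
      rw [hsgn η', Matrix.conjTranspose_mul,
        hfun_conjTranspose hPH (fun x => if η' < x then x⁻¹ else 0)]
      simp only [Matrix.mul_assoc]
      rw [← Matrix.mul_assoc Kᴴ K, hgid η' hη', hfun_mul_hfun hPH]
    rw [hstep, ← hfun_one hPH, hfun_sub hPH]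
    apply hfun_posSemidef hPH
    intro x
    by_cases hx : η' < x
    · have hx0 : x ≠ 0 := ne_of_gt (lt_of_le_of_lt hη' hx)
      simp [hx, inv_mul_cancel₀ hx0]
    · simp [hx]
  have hbound : ∀ η' : ℝ, 0 ≤ η' →
      (∑ i, if η' < hPH.eigenvalues i then hPH.eigenvalues i else 0) ≤ 1 := by
    intro η' hη'
    have hdt := dot_eq_trace ψ φ (sgnCutoff η' K)
    rw [← hKdef, hval η' hη'] at hdt
    have hcs := dotProduct_cauchy_schwarz φ (((1 : Matrix α α ℂ) ⊗ₖ sgnCutoff η' K) *ᵥ ψ)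
    rw [hdt, Complex.norm_real, Real.norm_eq_abs] at hcs
    have hle : (∑ i, if η' < hPH.eigenvalues i then hPH.eigenvalues i else 0)
        ≤ |∑ i, if η' < hPH.eigenvalues i then hPH.eigenvalues i else 0| := le_abs_self _
    have h1 : Real.sqrt (∑ x, ‖φ x‖ ^ 2) = 1 := by rw [hφ, Real.sqrt_one]
    have h2 : Real.sqrt (∑ x, ‖(((1 : Matrix α α ℂ) ⊗ₖ sgnCutoff η' K) *ᵥ ψ) x‖ ^ 2) ≤ 1 := by
      rw [show (1 : ℝ) = Real.sqrt 1 from Real.sqrt_one.symm]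
      apply Real.sqrt_le_sqrt
      calc ∑ x : α × β, ‖(((1 : Matrix α α ℂ) ⊗ₖ sgnCutoff η' K) *ᵥ ψ) x‖ ^ 2
          = ∑ a, ∑ b, ‖(sgnCutoff η' K *ᵥ fun b' => ψ (a, b')) b‖ ^ 2 := by
            rw [Fintype.sum_prod_type]
            exact Finset.sum_congr rfl fun a _ => Finset.sum_congr rfl fun b _ => by
              rw [kron_mulVec]
        _ ≤ ∑ a, ∑ b, ‖ψ (a, b)‖ ^ 2 :=
            Finset.sum_le_sum fun a _ => contraction_of_posSemidef (hWc η' hη') _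
        _ = 1 := by rw [← hψ, Fintype.sum_prod_type]
    rw [h1, one_mul] at hcs
    linarith
  have hs_eq : traceNorm K = ∑ i, hPH.eigenvalues i := by
    have htr := hfun_trace hPH (fun x => x)
    rw [hfun_id hPH] at htr
    rw [traceNorm, ← hPdef, htr, Complex.ofReal_re]
  have hs1 : (∑ i, hPH.eigenvalues i) ≤ 1 := by
    have hb := hbound 0 le_rfl
    calc ∑ i, hPH.eigenvalues i
        = ∑ i, (if (0 : ℝ) < hPH.eigenvalues i then hPH.eigenvalues i else 0) :=
          Finset.sum_congr rfl fun i _ => by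
            rcases (he0 i).lt_or_eq with h | h
            · rw [if_pos h]
            · rw [← h]; simp
      _ ≤ 1 := hb
  have ht0 : 0 ≤ ∑ i, if η < hPH.eigenvalues i then hPH.eigenvalues i else 0 :=
    Finset.sum_nonneg fun i _ => by
      by_cases hx : η < hPH.eigenvalues i
      · simp [hx, he0 i]
      · simp [hx]
  have hts : (∑ i, if η < hPH.eigenvalues i then hPH.eigenvalues i else 0)
      ≤ ∑ i, hPH.eigenvalues i :=
    Finset.sum_le_sum fun i _ => by
      by_cases hx : η < hPH.eigenvalues i
      · simp [hx]
      · simp [hx, he0 i]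
  have hst : (∑ i, hPH.eigenvalues i)
      - (∑ i, if η < hPH.eigenvalues i then hPH.eigenvalues i else 0)
      ≤ η * (Fintype.card β : ℝ) := by
    rw [← Finset.sum_sub_distrib]
    calc ∑ i, (hPH.eigenvalues i - if η < hPH.eigenvalues i then hPH.eigenvalues i else 0)
        ≤ ∑ _i : β, η := Finset.sum_le_sum fun i _ => by
          by_cases hx : η < hPH.eigenvalues i
          · simp [hx, hη]
          · simpa [hx] using le_of_not_gt hx
      _ = η * (Fintype.card β : ℝ) := by
          rw [Finset.sum_const, nsmul_eq_mul, Finset.card_univ, mul_comm]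
  have hvdot : star φ ⬝ᵥ (((1 : Matrix α α ℂ) ⊗ₖ sgnCutoff η K) *ᵥ ψ)
      = ((∑ i, if η < hPH.eigenvalues i then hPH.eigenvalues i else 0 : ℝ) : ℂ) := by
    rw [dot_eq_trace ψ φ (sgnCutoff η K), ← hKdef, hval η hη]
  rw [fidelity_eq ψ φ, ← hKdef, hW, hvdot, Complex.norm_real, Real.norm_eq_abs,
    abs_of_nonneg ht0, hs_eq]
  have key : ((∑ i, hPH.eigenvalues i)
        - (∑ i, if η < hPH.eigenvalues i then hPH.eigenvalues i else 0))
      * ((∑ i, hPH.eigenvalues i)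
        + (∑ i, if η < hPH.eigenvalues i then hPH.eigenvalues i else 0))
      ≤ (η * (Fintype.card β : ℝ)) * 2 := by
    apply mul_le_mul hst (by linarith) (by linarith)
    positivity
  nlinarith [key]
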